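/- Let $L_1,\dots,L_d$ be random variables with quantile functions $F_1^-,\dots,F_d^-$ and let $L^+ = \sum_{j=1}^d L_j$. For any $\alpha \in (0,1)$, the Value-at-Risk satisfies $\operatorname{VaR}_\alpha(L^+) \ge d \min_j F_j^-(\alpha/d)$, where $\operatorname{VaR}_\alpha(L^+) = \inf\{x : F_{L^+}(x) \ge \alpha\}$. -/

import Mathlib

open MeasureTheory

theorem stmt_2 {Ω : Type*} [MeasurableSpace Ω] (μ : Measure Ω) [IsProbabilityMeasure μ]
    (d : ℕ) (hd : 0 < d) (L : Fin d → Ω → ℝ) (hL : ∀ j, Measurable (L j))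
    (α : ℝ) (hα : α ∈ Set.Ioo (0:ℝ) 1) :
    d * Finset.univ.inf' (Finset.univ_nonempty_iff.mpr (Fin.pos_iff_nonempty.mp hd))
        (fun j => sInf {x : ℝ | α / d ≤ (μ {ω | L j ω ≤ x}).toReal}) ≤
      sInf {x : ℝ | α ≤ (μ {ω | ∑ j, L j ω ≤ x}).toReal} := by
  obtain ⟨hα0, hα1⟩ := hα
  have hdR : (0:ℝ) < d := Nat.cast_pos.mpr hd
  have hαd : 0 < α / d := div_pos hα0 hdR
  -- the target set is nonempty
  have hSne : ∃ x : ℝ, α ≤ (μ {ω | ∑ j, L j ω ≤ x}).toReal := by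
    have hmono : Monotone (fun n : ℕ => {ω | ∑ j, L j ω ≤ (n:ℝ)}) := by
      intro a b hab ω hω
      simp only [Set.mem_setOf_eq] at hω ⊢
      exact le_trans hω (by exact_mod_cast hab)
    have hU : (⋃ n : ℕ, {ω | ∑ j, L j ω ≤ (n:ℝ)}) = Set.univ := by
      ext ω
      simp only [Set.mem_iUnion, Set.mem_univ, iff_true]
      obtain ⟨n, hn⟩ := exists_nat_ge (∑ j, L j ω)
      exact ⟨n, hn⟩
    have ht := tendsto_measure_iUnion_atTop (μ := μ) hmono
    rw [hU, measure_univ] at ht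
    have hlt : ENNReal.ofReal α < 1 := by
      rw [← ENNReal.ofReal_one]
      exact (ENNReal.ofReal_lt_ofReal_iff one_pos).mpr hα1
    obtain ⟨n, hn⟩ := (ht.eventually_const_lt hlt).exists
    refine ⟨n, ?_⟩
    have h1 : μ {ω | ∑ j, L j ω ≤ (n:ℝ)} ≠ ⊤ := measure_ne_top μ _
    have := (ENNReal.ofReal_lt_iff_lt_toReal hα0.le h1).mp hn
    exact this.le
  obtain ⟨x0, hx0⟩ := hSne
  refine le_csInf ⟨x0, hx0⟩ ?_
  intro x hx
  simp only [Set.mem_setOf_eq] at hx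
  -- split the event
  have hsub : {ω | ∑ j, L j ω ≤ x} ⊆ ⋃ j, {ω | L j ω ≤ x / d} := by
    intro ω hω
    by_contra h
    simp only [Set.mem_iUnion, Set.mem_setOf_eq, not_exists, not_le] at h
    have hne : (Finset.univ : Finset (Fin d)).Nonempty :=
      Finset.univ_nonempty_iff.mpr (Fin.pos_iff_nonempty.mp hd)
    have hsum : ∑ _j : Fin d, x / d < ∑ j, L j ω :=
      Finset.sum_lt_sum_of_nonempty hne (fun j _ => h j)
    rw [Finset.sum_const, Finset.card_univ, Fintype.card_fin, nsmul_eq_mul,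
      mul_div_cancel₀ _ hdR.ne'] at hsum
    exact absurd hω (not_le.mpr hsum)
  have hle : μ {ω | ∑ j, L j ω ≤ x} ≤ ∑ j, μ {ω | L j ω ≤ x / d} := by
    refine (measure_mono hsub).trans ?_
    rw [← tsum_fintype (L := SummationFilter.unconditional _)]
    exact measure_iUnion_le _
  -- there is j with α/d ≤ F_j (x/d)
  have hj : ∃ j, α / d ≤ (μ {ω | L j ω ≤ x / d}).toReal := by
    by_contra h
    push_neg at h
    have hne : (Finset.univ : Finset (Fin d)).Nonempty :=
      Finset.univ_nonempty_iff.mpr (Fin.pos_iff_nonempty.mp hd)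
    have hsum : ∑ j, (μ {ω | L j ω ≤ x / d}).toReal < ∑ _j : Fin d, α / d :=
      Finset.sum_lt_sum_of_nonempty hne (fun j _ => h j)
    rw [Finset.sum_const, Finset.card_univ, Fintype.card_fin, nsmul_eq_mul,
      mul_div_cancel₀ _ hdR.ne'] at hsum
    have h1 : (μ {ω | ∑ j, L j ω ≤ x}).toReal ≤ ∑ j, (μ {ω | L j ω ≤ x / d}).toReal := by
      rw [← ENNReal.toReal_sum (fun j _ => measure_ne_top μ _)]
      exact ENNReal.toReal_mono (ENNReal.sum_ne_top.mpr (fun j _ => measure_ne_top μ _)) hle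
    linarith
  obtain ⟨j, hj⟩ := hj
  -- the j-th quantile set is bounded below
  have hbdd : BddBelow {y : ℝ | α / d ≤ (μ {ω | L j ω ≤ y}).toReal} := by
    have hanti : Antitone (fun n : ℕ => {ω | L j ω ≤ -(n:ℝ)}) := by
      intro a b hab ω hω
      simp only [Set.mem_setOf_eq] at hω ⊢
      exact le_trans hω (by exact_mod_cast neg_le_neg (Nat.cast_le.mpr hab))
    have hI : (⋂ n : ℕ, {ω | L j ω ≤ -(n:ℝ)}) = ∅ := by
      ext ω
      simp only [Set.mem_iInter, Set.mem_setOf_eq, Set.mem_empty_iff_false, iff_false, not_forall,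
        not_le]
      obtain ⟨n, hn⟩ := exists_nat_gt (-(L j ω))
      exact ⟨n, by linarith⟩
    have ht := tendsto_measure_iInter_atTop (μ := μ)
      (fun n => (measurableSet_le (hL j) measurable_const).nullMeasurableSet)
      hanti ⟨0, measure_ne_top μ _⟩
    rw [hI, measure_empty] at ht
    have hpos : (0 : ENNReal) < ENNReal.ofReal (α / d) := ENNReal.ofReal_pos.mpr hαd
    obtain ⟨n, hn⟩ := (ht.eventually_lt_const hpos).exists
    refine ⟨-(n:ℝ), ?_⟩
    intro y hy
    simp only [Set.mem_setOf_eq] at hy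
    by_contra hlt
    push_neg at hlt
    have hmono : μ {ω | L j ω ≤ y} ≤ μ {ω | L j ω ≤ -(n:ℝ)} :=
      measure_mono (fun ω hω => le_trans hω hlt.le)
    have h2 : (μ {ω | L j ω ≤ -(n:ℝ)}).toReal < α / d :=
      (ENNReal.lt_ofReal_iff_toReal_lt (measure_ne_top μ _)).mp hn
    have h3 : (μ {ω | L j ω ≤ y}).toReal ≤ (μ {ω | L j ω ≤ -(n:ℝ)}).toReal :=
      ENNReal.toReal_mono (measure_ne_top μ _) hmono
    linarith
  have hqle : sInf {y : ℝ | α / d ≤ (μ {ω | L j ω ≤ y}).toReal} ≤ x / d :=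
    csInf_le hbdd hj
  have hmle : Finset.univ.inf' (Finset.univ_nonempty_iff.mpr (Fin.pos_iff_nonempty.mp hd))
      (fun j => sInf {y : ℝ | α / d ≤ (μ {ω | L j ω ≤ y}).toReal}) ≤ x / d :=
    le_trans (Finset.inf'_le _ (Finset.mem_univ j)) hqle
  have hfin := mul_le_mul_of_nonneg_left hmle hdR.le
  rw [mul_div_cancel₀ _ hdR.ne'] at hfin
  exact hfin
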